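/- arXiv:1707.04618 — 6 statements merged into one kernel-verified Lean document; each statement's English description precedes it below -/
import Mathlib

section
/- (Loomis–Whitney inequality in three dimensions) For any finite set V ⊆ ℕ³, |V| ≤ (|π₁₂(V)| · |π₁₃(V)| · |π₂₃(V)|)^{1/2}, where π_{ij} projects a triple onto its coordinates i and j. Equivalently, |V|² ≤ |π₁₂(V)| · |π₁₃(V)| · |π₂₃(V)|. -/
/-- Loomis–Whitney inequality in three dimensions:
|V|² ≤ |π₁₂(V)| · |π₁₃(V)| · |π₂₃(V)|. -/
theorem loomis_whitney_3d (V : Finset (ℕ × ℕ × ℕ)) :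
    V.card ^ 2 ≤
      (V.image fun p => (p.1, p.2.1)).card *
      (V.image fun p => (p.1, p.2.2)).card *
      (V.image fun p => (p.2.1, p.2.2)).card := by
  classical
  set A := V.image fun p => (p.1, p.2.1) with hA
  set B := V.image fun p => (p.1, p.2.2) with hB
  set C := V.image fun p => (p.2.1, p.2.2) with hC
  -- fiber of (a,b) under π₁₂
  set n : ℕ × ℕ → ℕ := fun ab => (V.filter fun p => (p.1, p.2.1) = ab).card with hn
  have hcard : V.card = ∑ ab ∈ A, n ab :=
    Finset.card_eq_sum_card_fiberwise (fun p hp => Finset.mem_image_of_mem _ hp)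
  -- the set of pairs sharing the same π₁₂ projection
  set S : Finset ((ℕ × ℕ × ℕ) × (ℕ × ℕ × ℕ)) :=
    (V ×ˢ V).filter (fun x => x.1.1 = x.2.1 ∧ x.1.2.1 = x.2.2.1) with hS
  have hSsum : S.card = ∑ ab ∈ A, n ab ^ 2 := by
    rw [hS]
    rw [Finset.card_eq_sum_card_fiberwise
      (f := fun x : (ℕ × ℕ × ℕ) × (ℕ × ℕ × ℕ) => (x.1.1, x.1.2.1)) (t := A)]
    · refine Finset.sum_congr rfl fun ab _ => ?_
      rw [sq, hn, ← Finset.card_product]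
      congr 1
      ext x
      simp only [Finset.mem_filter, Finset.mem_product]
      constructor
      · rintro ⟨⟨⟨h1, h2⟩, h3, h4⟩, h5⟩
        exact ⟨⟨h1, h5⟩, h2, by rw [← h3, ← h4]; exact h5⟩
      · rintro ⟨⟨h1, h5⟩, h2, h6⟩
        have he := h5.trans h6.symm
        obtain ⟨e1, e2⟩ := Prod.mk.inj he
        exact ⟨⟨⟨h1, h2⟩, e1, e2⟩, h5⟩
    · rintro x hx
      simp only [Finset.mem_coe, Finset.mem_filter, Finset.mem_product] at hx
      exact Finset.mem_image_of_mem _ hx.1.1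
  have hS_le : S.card ≤ B.card * C.card := by
    rw [← Finset.card_product]
    apply Finset.card_le_card_of_injOn
      (fun x => ((x.1.1, x.1.2.2), (x.2.2.1, x.2.2.2)))
    · rintro x hx
      simp only [hS, Finset.mem_coe, Finset.mem_filter, Finset.mem_product] at hx
      obtain ⟨⟨h1, h2⟩, h3, h4⟩ := hx
      exact Finset.mem_product.2 ⟨Finset.mem_image_of_mem _ h1,
        Finset.mem_image_of_mem _ h2⟩
    · rintro x hx y hy hxy
      simp only [hS, Finset.mem_filter, Finset.mem_product, Finset.coe_filter,
        Set.mem_setOf_eq] at hx hy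
      obtain ⟨⟨-, -⟩, hx3, hx4⟩ := hx
      obtain ⟨⟨-, -⟩, hy3, hy4⟩ := hy
      simp only [Prod.mk.injEq] at hxy
      obtain ⟨⟨e1, e2⟩, e3, e4⟩ := hxy
      have : x.1 = y.1 := Prod.ext e1 (Prod.ext (by rw [hx4, hy4, e3]) e2)
      refine Prod.ext this (Prod.ext ?_ (Prod.ext e3 e4))
      rw [← hx3, ← hy3, e1]
  -- Cauchy–Schwarz over ℤ
  have hCS : (V.card : ℤ) ^ 2 ≤ (A.card : ℤ) * S.card := by
    rw [hcard, hSsum]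
    push_cast
    exact sq_sum_le_card_mul_sum_sq
  have : (V.card : ℤ) ^ 2 ≤ (A.card : ℤ) * (B.card * C.card) := by
    refine hCS.trans ?_
    have : (S.card : ℤ) ≤ (B.card : ℤ) * C.card := by exact_mod_cast hS_le
    nlinarith [Int.natCast_nonneg A.card]
  rw [mul_assoc]
  exact_mod_cast this
end

section
/- For any finite set V of m-tuples of natural numbers and 1 ≤ r ≤ m, if L is the union over all strictly increasing index subsets s of size r of the projections of V onto the coordinates in s (with coordinates kept in their original order), then |V| ≤ |L|^{m/r}. Equivalently, |V|^r ≤ |L|^m. -/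
open Finset MeasureTheory ENNReal

/-- Discrete Loomis–Whitney inequality: for a nonempty finite set `W` of
`(n+1)`-tuples, `|W|^n` is at most the product of the cardinalities of the
`n+1` codimension-one projections of `W`. -/
private lemma discrete_LW : ∀ (n : ℕ) (W : Finset (Fin (n+1) → ℕ)), W.Nonempty →
    W.card ^ n ≤ ∏ i : Fin (n+1), (W.image (· ∘ i.succAbove)).card := by
  intro n
  induction n with
  | zero =>
    intro W hW
    rw [pow_zero]
    exact Nat.one_le_iff_ne_zero.mpr
      (Finset.prod_pos (fun i _ => Finset.card_pos.mpr (hW.image _))).ne'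
  | succ n IH =>
    intro W hW
    classical
    set lst : Fin (n+2) := Fin.last (n+1) with hlst
    set A : ℕ → Finset (Fin (n+2) → ℕ) := fun t => W.filter (fun w => w lst = t) with hA
    set Q : ℕ → Finset (Fin (n+1) → ℕ) := fun t => (A t).image (· ∘ Fin.castSucc) with hQ
    set T : Finset ℕ := W.image (fun w => w lst) with hT
    set P : Fin (n+2) → ℕ := fun j => (W.image (· ∘ j.succAbove)).card with hP
    set d : Fin (n+1) → ℕ → ℕ := fun i t => ((Q t).image (· ∘ i.succAbove)).card with hd
    set p : ℝ := 1 / (n+1) with hp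
    have hp0 : (0:ℝ) < p := by positivity
    have hAQ : ∀ t, (A t).card = (Q t).card := by
      intro t
      refine (Finset.card_image_of_injOn ?_).symm
      intro w hw w' hw' h
      funext j
      refine Fin.lastCases ?_ (fun j' => congrFun h j') j
      · have h1 : w lst = t := (Finset.mem_filter.mp hw).2
        have h2 : w' lst = t := (Finset.mem_filter.mp hw').2
        rw [hlst] at h1 h2
        rw [h1, h2]
    have hA0 : ∀ t ∉ T, A t = ∅ := by
      intro t ht
      rw [hA, Finset.filter_eq_empty_iff]
      intro w hw hwt
      exact ht (Finset.mem_image.mpr ⟨w, hw, hwt⟩)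
    have hQ0 : ∀ t ∉ T, Q t = ∅ := by
      intro t ht
      show (A t).image (· ∘ Fin.castSucc) = ∅
      rw [hA0 t ht, Finset.image_empty]
    have hd0 : ∀ i t, t ∉ T → d i t = 0 := by
      intro i t ht
      show ((Q t).image (· ∘ i.succAbove)).card = 0
      rw [hQ0 t ht, Finset.image_empty, Finset.card_empty]
    have hQP : ∀ t, (Q t).card ≤ P lst := by
      intro t
      have hsub : Q t ⊆ W.image (· ∘ Fin.castSucc) :=
        Finset.image_subset_image (Finset.filter_subset _ _)
      have := Finset.card_le_card hsub
      simpa [hP, hlst, Fin.succAbove_last] using this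
    have hQne : ∀ t ∈ T, (Q t).Nonempty := by
      intro t ht
      obtain ⟨w, hw, hwt⟩ := Finset.mem_image.mp ht
      exact ⟨w ∘ Fin.castSucc,
        Finset.mem_image.mpr ⟨w, Finset.mem_filter.mpr ⟨hw, hwt⟩, rfl⟩⟩
    have hIH : ∀ t ∈ T, (Q t).card ^ n ≤ ∏ i : Fin (n+1), d i t :=
      fun t ht => IH (Q t) (hQne t ht)
    have hsum_d : ∀ i : Fin (n+1), ∑ t ∈ T, d i t ≤ P i.castSucc := by
      intro i
      have hle : ∀ t, d i t ≤ ((A t).image (· ∘ i.castSucc.succAbove)).card := by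
        intro t
        have himg : ((A t).image (· ∘ Fin.castSucc)).image (· ∘ i.succAbove)
            = ((A t).image (· ∘ i.castSucc.succAbove)).image (· ∘ Fin.castSucc) := by
          rw [Finset.image_image, Finset.image_image]
          apply Finset.image_congr
          intro w _
          funext j
          exact (congrArg w Fin.castSucc_succAbove_castSucc).symm
        show ((Q t).image (· ∘ i.succAbove)).card ≤ _
        rw [show (Q t) = (A t).image (· ∘ Fin.castSucc) from rfl, himg]
        exact Finset.card_image_le
      have hlast : ∀ (t : ℕ) (u : Fin (n+1) → ℕ),
          u ∈ (A t).image (· ∘ i.castSucc.succAbove) → u (Fin.last n) = t := by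
        intro t u hu
        obtain ⟨w, hw, rfl⟩ := Finset.mem_image.mp hu
        have h1 : i.castSucc.succAbove (Fin.last n) = lst := by
          rw [Fin.succAbove_castSucc_of_le i (Fin.last n) (Fin.le_last i), Fin.succ_last]
        simp only [Function.comp_apply, h1]
        exact (Finset.mem_filter.mp hw).2
      calc ∑ t ∈ T, d i t
          ≤ ∑ t ∈ T, ((A t).image (· ∘ i.castSucc.succAbove)).card :=
            Finset.sum_le_sum (fun t _ => hle t)
        _ = (T.biUnion (fun t => (A t).image (· ∘ i.castSucc.succAbove))).card := by
            refine (Finset.card_biUnion ?_).symm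
            intro t1 _ t2 _ hne
            rw [Function.onFun, Finset.disjoint_left]
            intro u hu1 hu2
            exact hne ((hlast t1 u hu1).symm.trans (hlast t2 u hu2))
        _ ≤ P i.castSucc := by
            apply Finset.card_le_card
            intro u hu
            obtain ⟨t, _, hu⟩ := Finset.mem_biUnion.mp hu
            obtain ⟨w, hw, rfl⟩ := Finset.mem_image.mp hu
            exact Finset.mem_image_of_mem _ (Finset.mem_filter.mp hw).1
    -- the ENNReal estimate
    have key : (W.card : ℝ≥0∞) ≤ (P lst : ℝ≥0∞) ^ p
        * ∏ i : Fin (n+1), ((P i.castSucc : ℝ≥0∞)) ^ p := by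
      have hWsum : W.card = ∑ t ∈ T, (A t).card :=
        Finset.card_eq_sum_card_fiberwise (fun w hw => Finset.mem_image_of_mem _ hw)
      have point : ∀ t ∈ T, ((A t).card : ℝ≥0∞)
          ≤ (P lst : ℝ≥0∞) ^ p * ∏ i : Fin (n+1), ((d i t : ℕ) : ℝ≥0∞) ^ p := by
        intro t ht
        have hc0 : ((Q t).card : ℝ≥0∞) ≠ 0 := by
          exact_mod_cast (hQne t ht).card_pos.ne'
        have hctop : ((Q t).card : ℝ≥0∞) ≠ ⊤ := ENNReal.natCast_ne_top _
        have hexp : p + (n:ℝ) * p = 1 := by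
          rw [hp]; field_simp; ring
        have hsplit : ((Q t).card : ℝ≥0∞)
            = ((Q t).card : ℝ≥0∞) ^ p * ((Q t).card : ℝ≥0∞) ^ ((n:ℝ) * p) := by
          rw [← ENNReal.rpow_add _ _ hc0 hctop, hexp, ENNReal.rpow_one]
        rw [hAQ, hsplit]
        refine mul_le_mul' (ENNReal.rpow_le_rpow (by exact_mod_cast hQP t) hp0.le) ?_
        have h1 : ((Q t).card : ℝ≥0∞) ^ ((n:ℝ) * p) = (((Q t).card : ℝ≥0∞) ^ (n:ℕ)) ^ p := by
          rw [← ENNReal.rpow_natCast ((Q t).card : ℝ≥0∞) n, ← ENNReal.rpow_mul]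
        have h2 : (((Q t).card : ℝ≥0∞) ^ (n:ℕ)) ≤ ∏ i : Fin (n+1), ((d i t : ℕ) : ℝ≥0∞) := by
          exact_mod_cast hIH t ht
        calc ((Q t).card : ℝ≥0∞) ^ ((n:ℝ) * p)
            = (((Q t).card : ℝ≥0∞) ^ (n:ℕ)) ^ p := h1
          _ ≤ (∏ i : Fin (n+1), ((d i t : ℕ) : ℝ≥0∞)) ^ p := ENNReal.rpow_le_rpow h2 hp0.le
          _ = ∏ i : Fin (n+1), ((d i t : ℕ) : ℝ≥0∞) ^ p := (ENNReal.prod_rpow_of_nonneg hp0.le).symm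
      have holder : ∑ t ∈ T, ∏ i : Fin (n+1), ((d i t : ℕ) : ℝ≥0∞) ^ p
          ≤ ∏ i : Fin (n+1), (∑ t ∈ T, ((d i t : ℕ) : ℝ≥0∞)) ^ p := by
        have hzero : ∀ t ∉ T, ∏ i : Fin (n+1), ((d i t : ℕ) : ℝ≥0∞) ^ p = 0 := by
          intro t ht
          apply Finset.prod_eq_zero (Finset.mem_univ (0 : Fin (n+1)))
          rw [hd0 0 t ht]
          simpa using ENNReal.zero_rpow_of_pos hp0
        have hzero2 : ∀ (i : Fin (n+1)) (t : ℕ), t ∉ T → ((d i t : ℕ) : ℝ≥0∞) = 0 := by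
          intro i t ht; rw [hd0 i t ht]; simp
        calc ∑ t ∈ T, ∏ i : Fin (n+1), ((d i t : ℕ) : ℝ≥0∞) ^ p
            = ∑' t : ℕ, ∏ i : Fin (n+1), ((d i t : ℕ) : ℝ≥0∞) ^ p := (tsum_eq_sum hzero).symm
          _ = ∫⁻ t, ∏ i : Fin (n+1), ((d i t : ℕ) : ℝ≥0∞) ^ p ∂Measure.count :=
              (MeasureTheory.lintegral_count _).symm
          _ ≤ ∏ i : Fin (n+1), (∫⁻ t, ((d i t : ℕ) : ℝ≥0∞) ∂Measure.count) ^ p := by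
              refine ENNReal.lintegral_prod_norm_pow_le Finset.univ
                (f := fun i t => ((d i t : ℕ) : ℝ≥0∞)) (p := fun _ => p)
                (fun i _ => (measurable_of_countable _).aemeasurable) ?_ (fun i _ => hp0.le)
              rw [Finset.sum_const, Finset.card_univ, Fintype.card_fin, nsmul_eq_mul, hp]
              push_cast
              field_simp
          _ = ∏ i : Fin (n+1), (∑ t ∈ T, ((d i t : ℕ) : ℝ≥0∞)) ^ p := by
              refine Finset.prod_congr rfl (fun i _ => ?_)
              rw [MeasureTheory.lintegral_count, tsum_eq_sum (fun t ht => hzero2 i t ht)]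
      calc (W.card : ℝ≥0∞) = ∑ t ∈ T, ((A t).card : ℝ≥0∞) := by rw [hWsum]; push_cast; rfl
        _ ≤ ∑ t ∈ T, ((P lst : ℝ≥0∞) ^ p * ∏ i : Fin (n+1), ((d i t : ℕ) : ℝ≥0∞) ^ p) :=
            Finset.sum_le_sum point
        _ = (P lst : ℝ≥0∞) ^ p * ∑ t ∈ T, ∏ i : Fin (n+1), ((d i t : ℕ) : ℝ≥0∞) ^ p := by
            rw [Finset.mul_sum]
        _ ≤ (P lst : ℝ≥0∞) ^ p * ∏ i : Fin (n+1), (∑ t ∈ T, ((d i t : ℕ) : ℝ≥0∞)) ^ p :=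
            mul_le_mul_right holder _
        _ ≤ (P lst : ℝ≥0∞) ^ p * ∏ i : Fin (n+1), ((P i.castSucc : ℝ≥0∞)) ^ p := by
            refine mul_le_mul_right (Finset.prod_le_prod' fun i _ => ?_) _
            refine ENNReal.rpow_le_rpow ?_ hp0.le
            rw [← Nat.cast_sum]
            exact_mod_cast hsum_d i
    -- raise to the (n+1)-st power
    have hxp : ∀ x : ℝ≥0∞, (x ^ p) ^ (n+1 : ℕ) = x := by
      intro x
      rw [← ENNReal.rpow_natCast (x ^ p) (n+1), ← ENNReal.rpow_mul, hp]
      push_cast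
      rw [one_div, inv_mul_cancel₀ (by positivity), ENNReal.rpow_one]
    have final : ((W.card : ℝ≥0∞)) ^ (n+1 : ℕ) ≤ ∏ j : Fin (n+2), ((P j : ℕ) : ℝ≥0∞) := by
      calc ((W.card : ℝ≥0∞)) ^ (n+1 : ℕ)
          ≤ ((P lst : ℝ≥0∞) ^ p * ∏ i : Fin (n+1), ((P i.castSucc : ℝ≥0∞)) ^ p) ^ (n+1 : ℕ) :=
            pow_le_pow_left' key _
        _ = (P lst : ℝ≥0∞) * ∏ i : Fin (n+1), ((P i.castSucc : ℕ) : ℝ≥0∞) := by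
            rw [mul_pow, ← Finset.prod_pow, hxp]
            congr 1
            exact Finset.prod_congr rfl (fun i _ => hxp _)
        _ = ∏ j : Fin (n+2), ((P j : ℕ) : ℝ≥0∞) := by
            rw [Fin.prod_univ_castSucc (f := fun j : Fin (n+2) => ((P j : ℕ) : ℝ≥0∞))]
            rw [mul_comm]
      
    have := final
    rw [show ∏ j : Fin (n+2), ((P j : ℕ) : ℝ≥0∞) = ((∏ j : Fin (n+2), P j : ℕ) : ℝ≥0∞) by
      push_cast; rfl, show ((W.card : ℝ≥0∞)) ^ (n+1 : ℕ) = ((W.card ^ (n+1) : ℕ) : ℝ≥0∞) by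
      push_cast; rfl] at this
    exact_mod_cast this

/-- Generalized Loomis–Whitney projection bound: for a finite set V of m-tuples
and L the union over all strictly increasing index subsets of size r of the
corresponding projections of V, we have |V|^r ≤ |L|^m. -/
theorem generalized_loomis_whitney (m r : ℕ) (hr : 1 ≤ r) (hrm : r ≤ m)
    (V : Finset (Fin m → ℕ)) :
    V.card ^ r ≤
      (Set.ncard {w : Fin r → ℕ |
        ∃ v ∈ V, ∃ s : Fin r → Fin m, StrictMono s ∧ w = v ∘ s}) ^ m := by
  classical
  set L := {w : Fin r → ℕ | ∃ v ∈ V, ∃ s : Fin r → Fin m, StrictMono s ∧ w = v ∘ s} with hLdef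
  rcases V.eq_empty_or_nonempty with rfl | hVne
  · have : (0:ℕ) ^ r = 0 := Nat.zero_pow (by omega)
    simp [this]
  have hfin : L.Finite := by
    apply Set.Finite.subset
      (Set.finite_iUnion (fun s : Fin r → Fin m => V.finite_toSet.image (· ∘ s)))
    rintro w ⟨v, hv, s, hs, rfl⟩
    exact Set.mem_iUnion.mpr ⟨s, ⟨v, hv, rfl⟩⟩
  have key : ∀ k, r ≤ k → ∀ s : Fin k → Fin m, StrictMono s →
      (V.image (· ∘ s)).card ^ r ≤ L.ncard ^ k := by
    intro k hk
    induction k, hk using Nat.le_induction with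
    | base =>
      intro s hs
      have hsub : V.image (· ∘ s) ⊆ hfin.toFinset := by
        intro w hw
        obtain ⟨v, hv, rfl⟩ := Finset.mem_image.mp hw
        exact (Set.Finite.mem_toFinset hfin).mpr ⟨v, hv, s, hs, rfl⟩
      have hcard : (V.image (· ∘ s)).card ≤ L.ncard := by
        rw [Set.ncard_eq_toFinset_card L hfin]
        exact Finset.card_le_card hsub
      exact Nat.pow_le_pow_left hcard r
    | succ k hk IH =>
      intro s hs
      have hWne : (V.image (· ∘ s)).Nonempty := hVne.image _
      have lw := discrete_LW k (V.image (· ∘ s)) hWne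
      have hfac : ∀ i : Fin (k+1),
          ((V.image (· ∘ s)).image (· ∘ i.succAbove)).card ^ r ≤ L.ncard ^ k := by
        intro i
        rw [Finset.image_image]
        exact IH (s ∘ i.succAbove) (hs.comp (Fin.strictMono_succAbove i))
      have h1 : ((V.image (· ∘ s)).card ^ r) ^ k ≤ (L.ncard ^ (k+1)) ^ k := by
        calc ((V.image (· ∘ s)).card ^ r) ^ k
            = ((V.image (· ∘ s)).card ^ k) ^ r := by
              rw [← pow_mul, ← pow_mul, Nat.mul_comm]
          _ ≤ (∏ i : Fin (k+1), ((V.image (· ∘ s)).image (· ∘ i.succAbove)).card) ^ r :=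
              Nat.pow_le_pow_left lw r
          _ = ∏ i : Fin (k+1), ((V.image (· ∘ s)).image (· ∘ i.succAbove)).card ^ r := by
              rw [← Finset.prod_pow]
          _ ≤ ∏ _i : Fin (k+1), L.ncard ^ k :=
              Finset.prod_le_prod (fun _ _ => Nat.zero_le _) (fun i _ => hfac i)
          _ = (L.ncard ^ k) ^ (k+1) := by
              rw [Finset.prod_const, Finset.card_univ, Fintype.card_fin]
          _ = (L.ncard ^ (k+1)) ^ k := by rw [← pow_mul, ← pow_mul, Nat.mul_comm]
      exact (pow_le_pow_iff_left₀ (Nat.zero_le _) (Nat.zero_le _) (by omega)).mp h1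
  have := key m hrm id strictMono_id
  simpa [Function.comp_id, Finset.image_id] using this
end

section
/- If every column of a matrix R over a field has at most c nonzero entries (c ≥ 1), and the columns of R collectively have nonzeros in L distinct rows, then rank(R) ≥ L / c. More precisely, there is a subset of at least ⌈L/c⌉ columns which are linearly independent. -/
/-- If every column of R has at most c nonzero entries (c ≥ 1) and the columns
collectively have nonzeros in L distinct rows, then rank(R) ≥ L / c; more
precisely, there is a subset of at least ⌈L/c⌉ columns that are linearly
independent. -/
theorem rank_lower_bound_sparse_columns {F : Type*} [Field F] (n m c : ℕ)
    (hc : 1 ≤ c) (R : Matrix (Fin n) (Fin m) F)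
    (h : ∀ j, Set.ncard {i : Fin n | R i j ≠ 0} ≤ c) :
    Set.ncard {i : Fin n | ∃ j, R i j ≠ 0} ≤ c * R.rank ∧
    ∃ S : Finset (Fin m),
      (Set.ncard {i : Fin n | ∃ j, R i j ≠ 0} + c - 1) / c ≤ S.card ∧
      LinearIndependent F (fun j : S => fun i : Fin n => R i (j : Fin m)) := by
  classical
  rcases Nat.eq_zero_or_pos m with hm | hm
  · subst hm
    have hA : {i : Fin n | ∃ j, R i j ≠ 0} = ∅ := by
      ext i; simp only [Set.mem_setOf_eq, Set.mem_empty_iff_false, iff_false, not_exists]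
      exact fun j => j.elim0
    rw [hA]
    simp only [Set.ncard_empty]
    refine ⟨Nat.zero_le _, ∅, ?_, ?_⟩
    · simp only [Finset.card_empty]
      exact Nat.le_of_eq (Nat.div_eq_of_lt (by omega))
    · exact linearIndependent_empty_type
  · have : Nonempty (Fin m) := ⟨⟨0, hm⟩⟩
    set cols : Fin m → (Fin n → F) := fun j i => R i j with hcols
    obtain ⟨b, hbsub, hbspan, hbind⟩ := exists_linearIndependent F (Set.range cols)
    have hbfin : b.Finite := (Set.finite_range cols).subset hbsub
    haveI : Fintype b := hbfin.fintype
    -- g : inverse of cols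
    set g : (Fin n → F) → Fin m := Function.invFun cols with hg
    have hgv : ∀ v ∈ b, cols (g v) = v := fun v hv =>
      Function.invFun_eq (hbsub hv)
    set S : Finset (Fin m) := hbfin.toFinset.image g with hS
    have hScard : S.card = hbfin.toFinset.card := by
      apply Finset.card_image_of_injOn
      intro v hv w hw hvw
      rw [Finset.mem_coe, Set.Finite.mem_toFinset] at hv hw
      rw [← hgv v hv, ← hgv w hw, hvw]
    -- rank = card b
    have hrank : R.rank = hbfin.toFinset.card := by
      rw [Matrix.rank_eq_finrank_span_cols]
      have hrg : Set.range R.col = Set.range cols := rfl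
      rw [hrg, ← hbspan]
      have := finrank_span_set_eq_card (R := F) (M := Fin n → F) (s := b) hbind
      rw [this, Set.toFinset_card]
      simp [Set.Finite.card_toFinset]
    -- columns in S are ∈ b
    have hcolS : ∀ j ∈ S, cols j ∈ b := by
      intro j hj
      rw [hS, Finset.mem_image] at hj
      obtain ⟨v, hv, rfl⟩ := hj
      rw [Set.Finite.mem_toFinset] at hv
      rw [hgv v hv]; exact hv
    -- main inclusion: A ⊆ ⋃ j ∈ S, supp col j
    have hmain : {i : Fin n | ∃ j, R i j ≠ 0} ⊆ ⋃ j ∈ S, {i : Fin n | R i j ≠ 0} := by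
      rintro i ⟨j, hij⟩
      by_contra hni
      simp only [Set.mem_iUnion, Set.mem_setOf_eq, not_exists, not_not] at hni
      -- every element of b vanishes at i
      have hb0 : ∀ v ∈ b, v i = 0 := by
        intro v hv
        have : g v ∈ S := by
          rw [hS, Finset.mem_image]
          exact ⟨v, Set.Finite.mem_toFinset _ |>.2 hv, rfl⟩
        have := hni _ this
        rw [← hgv v hv]; exact this
      -- so every element of span b vanishes at i
      have hsp : Submodule.span F b ≤ LinearMap.ker (LinearMap.proj (R := F) (φ := fun _ : Fin n => F) i) := by
        rw [Submodule.span_le]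
        intro v hv
        simpa using hb0 v hv
      have hmem : cols j ∈ Submodule.span F b := by
        rw [hbspan]; exact Submodule.subset_span (Set.mem_range_self j)
      have := hsp hmem
      simp only [LinearMap.mem_ker, LinearMap.proj_apply] at this
      exact hij this
    -- cardinality bound: L ≤ c * |S|
    have hL : Set.ncard {i : Fin n | ∃ j, R i j ≠ 0} ≤ c * S.card := by
      calc Set.ncard {i : Fin n | ∃ j, R i j ≠ 0}
          ≤ Set.ncard (⋃ j ∈ S, {i : Fin n | R i j ≠ 0}) :=
            Set.ncard_le_ncard hmain (Set.toFinite _)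
        _ ≤ ∑ j ∈ S, Set.ncard {i : Fin n | R i j ≠ 0} := by
            classical
            have : (⋃ j ∈ S, {i : Fin n | R i j ≠ 0}) =
                ↑(S.biUnion fun j => {i : Fin n | R i j ≠ 0}.toFinset) := by
              ext i; simp
            rw [this, Set.ncard_coe_finset]
            refine (Finset.card_biUnion_le).trans ?_
            refine Finset.sum_le_sum fun j _ => ?_
            rw [← Set.ncard_eq_toFinset_card']
        _ ≤ ∑ j ∈ S, c := Finset.sum_le_sum fun j _ => h j
        _ = c * S.card := by rw [Finset.sum_const, smul_eq_mul, Nat.mul_comm]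
    have hLrank : Set.ncard {i : Fin n | ∃ j, R i j ≠ 0} ≤ c * R.rank := by
      rw [hrank, ← hScard]; exact hL
    refine ⟨hLrank, S, ?_, ?_⟩
    · -- ceiling div bound
      rw [Nat.div_le_iff_le_mul_add_pred (by omega)]
      omega
    · -- linear independence
      have hginv : ∀ j ∈ S, g (cols j) = j := by
        intro j hj
        obtain ⟨v, hv, rfl⟩ := Finset.mem_image.1 hj
        rw [Set.Finite.mem_toFinset] at hv
        rw [hgv v hv]
      have einj : Function.Injective (fun j : S => (⟨cols j, hcolS j j.2⟩ : b)) := by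
        intro j j' hjj'
        have h1 : cols (j : Fin m) = cols (j' : Fin m) := congrArg Subtype.val hjj'
        apply Subtype.ext
        rw [← hginv _ j.2, ← hginv _ j'.2, h1]
      exact hbind.comp _ einj
end

section
/- (Expansion bound for the direct evaluation symmetric contraction algorithm) Let V be a subset of the product index set of nondecreasing tuples (j ∈ I_s, l ∈ I_t, k ∈ I_v) where I_d denotes nondecreasing d-tuples from {1,...,n}. Let d_A be the number of distinct nondecreasing (s+v)-tuples obtainable by merging (sorting the concatenation of) some (j,k) with (j,l,k) ∈ V; similarly d_B for (k,l) merged into (v+t)-tuples and d_C for (j,l) merged into (s+t)-tuples. Then |V| ≤ [C(s+v,s)·C(v+t,v)·C(s+t,s)]^{1/2} · (d_A · d_B · d_C)^{1/2}. -/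
/-- The multiset of values of a tuple. -/
def tupleMultiset {d n : ℕ} (f : Fin d → Fin n) : Multiset (Fin n) :=
  Multiset.map f Finset.univ.val

lemma tupleMultiset_eq_ofFn {d n : ℕ} (f : Fin d → Fin n) :
    tupleMultiset f = ↑(List.ofFn f) := by
  simp [tupleMultiset, List.ofFn_eq_map, Fin.univ_def]

lemma tupleMultiset_card {d n : ℕ} (f : Fin d → Fin n) :
    Multiset.card (tupleMultiset f) = d := by
  simp [tupleMultiset_eq_ofFn]

/-- A monotone tuple is determined by its multiset of values. -/
lemma monotone_tuple_eq_of_tupleMultiset_eq {d n : ℕ} {f g : Fin d → Fin n}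
    (hf : Monotone f) (hg : Monotone g) (h : tupleMultiset f = tupleMultiset g) : f = g := by
  rw [tupleMultiset_eq_ofFn, tupleMultiset_eq_ofFn] at h
  exact List.ofFn_injective <| List.Perm.eq_of_sortedLE
    (List.sortedLE_ofFn_iff.2 hf) (List.sortedLE_ofFn_iff.2 hg) (Quotient.exact h)

/-- Splitting bound: a set of pairs of monotone tuples has cardinality at most
`C(s+v, s)` times the number of distinct merged multisets. -/
lemma pair_card_le_choose_mul {s v n : ℕ}
    (W : Finset ((Fin s → Fin n) × (Fin v → Fin n)))
    (hW : ∀ x ∈ W, Monotone x.1 ∧ Monotone x.2) :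
    W.card ≤ (s + v).choose s *
      (W.image fun x => tupleMultiset x.1 + tupleMultiset x.2).card := by
  classical
  apply Finset.card_le_mul_card_image
  intro m hm
  set F := W.filter fun x => tupleMultiset x.1 + tupleMultiset x.2 = m with hF
  have hcard : ∀ x ∈ F, tupleMultiset x.1 ∈ (Multiset.powersetCard s m).toFinset := by
    intro x hx
    obtain ⟨hxW, hxm⟩ := Finset.mem_filter.1 hx
    rw [Multiset.mem_toFinset, Multiset.mem_powersetCard]
    exact ⟨hxm ▸ Multiset.le_add_right _ _, tupleMultiset_card _⟩
  have hinj : Set.InjOn (fun x => tupleMultiset x.1) (F : Set ((Fin s → Fin n) × (Fin v → Fin n))) := by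
    intro x hx y hy hxy
    obtain ⟨hxW, hxm⟩ := Finset.mem_filter.1 hx
    obtain ⟨hyW, hym⟩ := Finset.mem_filter.1 hy
    obtain ⟨hx1, hx2⟩ := hW x hxW
    obtain ⟨hy1, hy2⟩ := hW y hyW
    have h1 : x.1 = y.1 := monotone_tuple_eq_of_tupleMultiset_eq hx1 hy1 hxy
    have h2' : tupleMultiset x.2 = tupleMultiset y.2 := by
      have := hxm.trans hym.symm
      simp only at hxy
      rw [hxy] at this
      exact add_left_cancel this
    have h2 : x.2 = y.2 := monotone_tuple_eq_of_tupleMultiset_eq hx2 hy2 h2'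
    exact Prod.ext h1 h2
  have hge : F.card ≤ (Multiset.powersetCard s m).toFinset.card :=
    Finset.card_le_card_of_injOn _ hcard hinj
  have hmc : Multiset.card m = s + v := by
    obtain ⟨x, _, rfl⟩ := Finset.mem_image.1 hm
    simp [tupleMultiset_card]
  calc F.card ≤ (Multiset.powersetCard s m).toFinset.card := hge
    _ ≤ Multiset.card (Multiset.powersetCard s m) := Multiset.toFinset_card_le _
    _ = (s + v).choose s := by rw [Multiset.card_powersetCard, hmc]

/-- Discrete Loomis–Whitney inequality for three coordinates. -/
lemma loomis_whitney {α β γ : Type*} [DecidableEq α] [DecidableEq β] [DecidableEq γ]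
    (V : Finset (α × β × γ)) :
    V.card ^ 2 ≤ (V.image fun x => (x.1, x.2.2)).card *
      ((V.image fun x => (x.2.2, x.2.1)).card * (V.image fun x => (x.1, x.2.1)).card) := by
  classical
  set P := V.image fun x => (x.1, x.2.1) with hP
  set F : α × β → Finset (α × β × γ) := fun p => V.filter fun x => (x.1, x.2.1) = p with hf
  have h1 : V.card = ∑ p ∈ P, (F p).card := Finset.card_eq_sum_card_image _ _
  have h2 : V.card ^ 2 ≤ P.card * ∑ p ∈ P, (F p).card ^ 2 := by
    rw [h1]; exact sq_sum_le_card_mul_sum_sq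
  have hdisj : (P : Set (α × β)).PairwiseDisjoint fun p => F p ×ˢ F p := by
    intro p _ q _ hpq
    simp only [Finset.disjoint_left]
    rintro z hz hz'
    obtain ⟨hz1, _⟩ := Finset.mem_product.1 hz
    obtain ⟨hz1', _⟩ := Finset.mem_product.1 hz'
    exact hpq ((Finset.mem_filter.1 hz1).2.symm.trans (Finset.mem_filter.1 hz1').2)
  have h3 : ∑ p ∈ P, (F p).card ^ 2 = (P.biUnion fun p => F p ×ˢ F p).card := by
    rw [Finset.card_biUnion hdisj]
    exact Finset.sum_congr rfl fun p _ => by rw [Finset.card_product]; ring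
  have h4 : (P.biUnion fun p => F p ×ˢ F p).card ≤
      (V.image fun x => (x.1, x.2.2)).card * (V.image fun x => (x.2.2, x.2.1)).card := by
    rw [← Finset.card_product]
    apply Finset.card_le_card_of_injOn
      (fun z => ((z.1.1, z.1.2.2), (z.2.2.2, z.2.2.1)))
    · intro z hz
      obtain ⟨p, _, hzp⟩ := Finset.mem_biUnion.1 hz
      obtain ⟨hz1, hz2⟩ := Finset.mem_product.1 hzp
      exact Finset.mem_product.2 ⟨Finset.mem_image_of_mem _ (Finset.mem_filter.1 hz1).1,
        Finset.mem_image_of_mem _ (Finset.mem_filter.1 hz2).1⟩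
    · rintro ⟨⟨a, b, c⟩, ⟨a', b', c'⟩⟩ hz ⟨⟨d, e, k⟩, ⟨d', e', k'⟩⟩ hw heq
      obtain ⟨p, _, hzp⟩ := Finset.mem_biUnion.1 hz
      obtain ⟨q, _, hwq⟩ := Finset.mem_biUnion.1 hw
      obtain ⟨hz1, hz2⟩ := Finset.mem_product.1 hzp
      obtain ⟨hw1, hw2⟩ := Finset.mem_product.1 hwq
      have e1 := (Finset.mem_filter.1 hz1).2
      have e2 := (Finset.mem_filter.1 hz2).2
      have e3 := (Finset.mem_filter.1 hw1).2
      have e4 := (Finset.mem_filter.1 hw2).2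
      subst e1
      subst e3
      simp only [Prod.mk.injEq] at heq e2 e4
      obtain ⟨⟨h1, h2⟩, h3, h4⟩ := heq
      obtain ⟨ha2, hb2⟩ := e2
      obtain ⟨hd2, he2⟩ := e4
      simp_all
  calc V.card ^ 2 ≤ P.card * ∑ p ∈ P, (F p).card ^ 2 := h2
    _ ≤ P.card * ((V.image fun x => (x.1, x.2.2)).card *
        (V.image fun x => (x.2.2, x.2.1)).card) := by
        exact Nat.mul_le_mul_left _ (h3 ▸ h4)
    _ = _ := by ring

/-- Expansion bound for the direct evaluation symmetric contraction algorithm: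
for a subset V of product indices (j,l,k) of nondecreasing tuples,
|V| ≤ [C(s+v,s)·C(v+t,v)·C(s+t,s)]^{1/2} · (d_A·d_B·d_C)^{1/2}, where
d_A, d_B, d_C count the distinct merged tuples (multisets) of (j,k), (k,l),
(j,l) respectively. -/
theorem direct_eval_expansion_bound (s t v n : ℕ)
    (V : Finset ((Fin s → Fin n) × (Fin t → Fin n) × (Fin v → Fin n)))
    (hV : ∀ x ∈ V, Monotone x.1 ∧ Monotone x.2.1 ∧ Monotone x.2.2) :
    (V.card : ℝ) ≤
      Real.sqrt (((s + v).choose s * (v + t).choose v * (s + t).choose s : ℕ)) *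
        Real.sqrt
          (((V.image fun x => tupleMultiset x.1 + tupleMultiset x.2.2).card *
            (V.image fun x => tupleMultiset x.2.2 + tupleMultiset x.2.1).card *
            (V.image fun x => tupleMultiset x.1 + tupleMultiset x.2.1).card : ℕ)) := by
  classical
  set dA := (V.image fun x => tupleMultiset x.1 + tupleMultiset x.2.2).card with hdA
  set dB := (V.image fun x => tupleMultiset x.2.2 + tupleMultiset x.2.1).card with hdB
  set dC := (V.image fun x => tupleMultiset x.1 + tupleMultiset x.2.1).card with hdC
  -- bound projections by choose * d
  have hA : (V.image fun x => (x.1, x.2.2)).card ≤ (s + v).choose s * dA := by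
    have := pair_card_le_choose_mul (V.image fun x => (x.1, x.2.2)) (by
      rintro ⟨j, k⟩ hjk
      obtain ⟨x, hx, hxe⟩ := Finset.mem_image.1 hjk
      obtain ⟨h1, _, h3⟩ := hV x hx
      cases hxe
      exact ⟨h1, h3⟩)
    rw [Finset.image_image] at this
    exact this
  have hB : (V.image fun x => (x.2.2, x.2.1)).card ≤ (v + t).choose v * dB := by
    have := pair_card_le_choose_mul (V.image fun x => (x.2.2, x.2.1)) (by
      rintro ⟨k, l⟩ hkl
      obtain ⟨x, hx, hxe⟩ := Finset.mem_image.1 hkl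
      obtain ⟨_, h2, h3⟩ := hV x hx
      cases hxe
      exact ⟨h3, h2⟩)
    rw [Finset.image_image] at this
    exact this
  have hC : (V.image fun x => (x.1, x.2.1)).card ≤ (s + t).choose s * dC := by
    have := pair_card_le_choose_mul (V.image fun x => (x.1, x.2.1)) (by
      rintro ⟨j, l⟩ hjl
      obtain ⟨x, hx, hxe⟩ := Finset.mem_image.1 hjl
      obtain ⟨h1, h2, _⟩ := hV x hx
      cases hxe
      exact ⟨h1, h2⟩)
    rw [Finset.image_image] at this
    exact this
  have key : V.card ^ 2 ≤ ((s + v).choose s * (v + t).choose v * (s + t).choose s) *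
      (dA * dB * dC) := by
    calc V.card ^ 2 ≤ (V.image fun x => (x.1, x.2.2)).card *
          ((V.image fun x => (x.2.2, x.2.1)).card * (V.image fun x => (x.1, x.2.1)).card) :=
        loomis_whitney V
      _ ≤ ((s + v).choose s * dA) * (((v + t).choose v * dB) * ((s + t).choose s * dC)) :=
        Nat.mul_le_mul hA (Nat.mul_le_mul hB hC)
      _ = _ := by ring
  have key' : (V.card : ℝ) ^ 2 ≤
      (((s + v).choose s * (v + t).choose v * (s + t).choose s : ℕ) : ℝ) *
        ((dA * dB * dC : ℕ) : ℝ) := by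
    push_cast
    exact_mod_cast key
  calc (V.card : ℝ) = Real.sqrt ((V.card : ℝ) ^ 2) := by
        rw [Real.sqrt_sq (by positivity)]
    _ ≤ Real.sqrt ((((s + v).choose s * (v + t).choose v * (s + t).choose s : ℕ) : ℝ) *
        ((dA * dB * dC : ℕ) : ℝ)) := Real.sqrt_le_sqrt key'
    _ = _ := by rw [Real.sqrt_mul (by positivity)]
end

section
/- (Projection lower bound for nondecreasing tuples) Let Z be a set of nondecreasing ω-tuples from {1,...,n}, and let L = {j : j is a nondecreasing r-subtuple (subsequence) of some i ∈ Z}. Then |L| ≥ |Z|^{r/ω}. -/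
open Finset
open scoped NNReal

/-- Generalized equal-exponent Hölder inequality in power form, with a constant. -/
lemma holder_pow_const {γ ι : Type*} (C : Finset γ) (K : Finset ι) (hK : K.Nonempty)
    (A : ℝ≥0) (z : γ → ℝ≥0) (x : ι → γ → ℝ≥0)
    (h : ∀ c ∈ C, z c ^ K.card ≤ A * ∏ k ∈ K, x k c) :
    (∑ c ∈ C, z c) ^ K.card ≤ A * ∏ k ∈ K, ∑ c ∈ C, x k c := by
  set n := K.card with hn
  have hn0 : n ≠ 0 := Finset.card_ne_zero.2 hK
  have hzero : (∀ c ∈ C, z c = 0) → (∑ c ∈ C, z c) ^ n ≤ A * ∏ k ∈ K, ∑ c ∈ C, x k c := by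
    intro hz
    rw [Finset.sum_eq_zero hz, zero_pow hn0]
    exact zero_le
  by_cases hS : ∃ k ∈ K, (∑ c ∈ C, x k c) = 0
  · obtain ⟨k, hk, hk0⟩ := hS
    refine hzero fun c hc => ?_
    have hx : x k c = 0 := (Finset.sum_eq_zero_iff.1 hk0) c hc
    have h1 := h c hc
    rw [Finset.prod_eq_zero hk hx, mul_zero] at h1
    have h2 : z c ^ n = 0 := le_antisymm h1 zero_le
    exact pow_eq_zero_iff hn0 |>.1 h2
  by_cases hA : A = 0
  · refine hzero fun c hc => ?_
    have h1 := h c hc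
    rw [hA, zero_mul] at h1
    have h2 : z c ^ n = 0 := le_antisymm h1 zero_le
    exact pow_eq_zero_iff hn0 |>.1 h2
  push_neg at hS
  set S : ι → ℝ≥0 := fun k => ∑ c ∈ C, x k c with hSdef
  have hnR : ((n : ℝ≥0) : ℝ) ≠ 0 := by
    exact_mod_cast Nat.cast_ne_zero.2 hn0
  -- key bound with fractional exponents
  have key : ∑ c ∈ C, z c ≤ A ^ ((n : ℝ)⁻¹) * ∏ k ∈ K, S k ^ ((n : ℝ)⁻¹) := by
    have step1 : ∀ c ∈ C, z c ≤ A ^ ((n : ℝ)⁻¹) * ∏ k ∈ K, (x k c) ^ ((n : ℝ)⁻¹) := by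
      intro c hc
      have h1 : (z c ^ n : ℝ≥0) ^ ((n : ℝ)⁻¹) ≤ (A * ∏ k ∈ K, x k c) ^ ((n : ℝ)⁻¹) :=
        NNReal.rpow_le_rpow (h c hc) (by positivity)
      have h2 : (z c ^ n : ℝ≥0) ^ ((n : ℝ)⁻¹) = z c := by
        rw [← NNReal.rpow_natCast (z c) n, ← NNReal.rpow_mul,
          mul_inv_cancel₀ (by exact_mod_cast hn0), NNReal.rpow_one]
      rw [h2] at h1
      rwa [NNReal.mul_rpow, ← NNReal.finset_prod_rpow] at h1
    calc ∑ c ∈ C, z c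
        ≤ ∑ c ∈ C, A ^ ((n : ℝ)⁻¹) * ∏ k ∈ K, (x k c) ^ ((n : ℝ)⁻¹) :=
          Finset.sum_le_sum step1
      _ ≤ A ^ ((n : ℝ)⁻¹) * ∏ k ∈ K, S k ^ ((n : ℝ)⁻¹) := by
          rw [← Finset.mul_sum]
          refine mul_le_mul_right ?_ _
          -- ∑ c, ∏ k, x k c ^ (1/n) ≤ ∏ k, S k ^ (1/n)
          have amgm : ∀ c ∈ C,
              ∏ k ∈ K, (x k c) ^ ((n : ℝ)⁻¹)
                ≤ (∏ k ∈ K, S k ^ ((n : ℝ)⁻¹)) * ∑ k ∈ K, (n : ℝ≥0)⁻¹ * (x k c / S k) := by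
            intro c hc
            have hrw : ∀ k ∈ K, (x k c) ^ ((n : ℝ)⁻¹)
                = S k ^ ((n : ℝ)⁻¹) * (x k c / S k) ^ ((n : ℝ)⁻¹) := by
              intro k hk
              rw [← NNReal.mul_rpow, mul_div_cancel₀ _ (hS k hk)]
            rw [Finset.prod_congr rfl hrw, Finset.prod_mul_distrib]
            refine mul_le_mul_right ?_ _
            have := NNReal.geom_mean_le_arith_mean_weighted K
              (fun _ => (n : ℝ≥0)⁻¹) (fun k => x k c / S k)
              (by
                rw [Finset.sum_const, nsmul_eq_mul, ← hn]
                rw [mul_inv_cancel₀ (by exact_mod_cast hn0)])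
            simpa [NNReal.coe_inv, NNReal.coe_natCast] using this
          calc ∑ c ∈ C, ∏ k ∈ K, (x k c) ^ ((n : ℝ)⁻¹)
              ≤ ∑ c ∈ C, (∏ k ∈ K, S k ^ ((n : ℝ)⁻¹)) * ∑ k ∈ K, (n : ℝ≥0)⁻¹ * (x k c / S k) :=
                Finset.sum_le_sum amgm
            _ = (∏ k ∈ K, S k ^ ((n : ℝ)⁻¹)) * ∑ c ∈ C, ∑ k ∈ K, (n : ℝ≥0)⁻¹ * (x k c / S k) := by
                rw [← Finset.mul_sum]
            _ = (∏ k ∈ K, S k ^ ((n : ℝ)⁻¹)) * 1 := by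
                congr 1
                rw [Finset.sum_comm]
                have : ∀ k ∈ K, ∑ c ∈ C, (n : ℝ≥0)⁻¹ * (x k c / S k) = (n : ℝ≥0)⁻¹ := by
                  intro k hk
                  rw [← Finset.mul_sum]
                  have : ∑ c ∈ C, x k c / S k = 1 := by
                    rw [← Finset.sum_div, div_self (hS k hk)]
                  rw [this, mul_one]
                rw [Finset.sum_congr rfl this, Finset.sum_const, nsmul_eq_mul, ← hn,
                  mul_inv_cancel₀ (by exact_mod_cast hn0)]
            _ = ∏ k ∈ K, S k ^ ((n : ℝ)⁻¹) := mul_one _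
  -- raise to the n-th power
  have final := pow_le_pow_left' key n
  have hAs : (A ^ ((n : ℝ)⁻¹)) ^ n = A := by
    rw [← NNReal.rpow_natCast (A ^ ((n : ℝ)⁻¹)) n, ← NNReal.rpow_mul,
      inv_mul_cancel₀ (by exact_mod_cast hn0), NNReal.rpow_one]
  calc (∑ c ∈ C, z c) ^ n
      ≤ (A ^ ((n : ℝ)⁻¹) * ∏ k ∈ K, S k ^ ((n : ℝ)⁻¹)) ^ n := final
    _ = A * ∏ k ∈ K, S k := by
        rw [mul_pow, hAs, ← Finset.prod_pow]
        congr 1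
        refine Finset.prod_congr rfl fun k hk => ?_
        rw [← NNReal.rpow_natCast (S k ^ ((n : ℝ)⁻¹)) n, ← NNReal.rpow_mul,
          inv_mul_cancel₀ (by exact_mod_cast hn0), NNReal.rpow_one]

/-- Discrete Loomis–Whitney / Han's inequality: the size of a finite set of
`(m+1)`-tuples to the `m`-th power is at most the product of the sizes of its
`m+1` coordinate-deletion projections. -/
lemma loomis_whitney_s14 {α : Type*} [DecidableEq α] :
    ∀ (m : ℕ) (Z : Finset (Fin (m + 1) → α)), Z.Nonempty →
      Z.card ^ m ≤ ∏ k : Fin (m + 1), (Z.image (fun f => f ∘ k.succAbove)).card := by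
  intro m
  induction m with
  | zero =>
    intro Z hZ
    rw [pow_zero]
    rw [Fin.prod_univ_one]
    exact Finset.card_pos.2 (hZ.image _)
  | succ m ih =>
    intro Z hZ
    classical
    set T : Finset α := Z.image (fun f => f (Fin.last (m + 1))) with hT
    set Zc : α → Finset (Fin (m + 2) → α) :=
      fun c => Z.filter (fun f => f (Fin.last (m + 1)) = c) with hZc
    set W : α → Finset (Fin (m + 1) → α) :=
      fun c => (Zc c).image (fun f => f ∘ Fin.castSucc) with hW
    set Q : Fin (m + 1) → α → Finset (Fin m → α) :=
      fun k c => (W c).image (fun u => u ∘ k.succAbove) with hQ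
    set P : Fin (m + 2) → Finset (Fin (m + 1) → α) :=
      fun k => Z.image (fun f => f ∘ k.succAbove) with hP
    -- cardinality of Z as sum of fibers
    have hcard : Z.card = ∑ c ∈ T, (Zc c).card :=
      Finset.card_eq_sum_card_fiberwise (fun f hf => Finset.mem_image_of_mem _ hf)
    -- fibers have the same size as their projections
    have hZcW : ∀ c, (Zc c).card = (W c).card := by
      intro c
      rw [hW]
      refine (Finset.card_image_of_injOn ?_).symm
      intro f hf g hg hfg
      have hfc : f (Fin.last (m + 1)) = c := (Finset.mem_filter.1 hf).2
      have hgc : g (Fin.last (m + 1)) = c := (Finset.mem_filter.1 hg).2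
      funext j
      induction j using Fin.lastCases with
      | last => rw [hfc, hgc]
      | cast j => exact congrFun hfg j
    -- each W c is contained in the projection along the last coordinate
    have hWP : ∀ c, W c ⊆ P (Fin.last (m + 1)) := by
      intro c
      have : P (Fin.last (m + 1)) = Z.image (fun f => f ∘ Fin.castSucc) := by
        rw [hP]
        simp [Fin.succAbove_last]
      rw [this, hW]
      exact Finset.image_subset_image (Finset.filter_subset _ _)
    -- sum of fiber projections bounds by full projections
    have hQP : ∀ k : Fin (m + 1), ∑ c ∈ T, (Q k c).card ≤ (P k.castSucc).card := by
      intro k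
      have himg : ∀ c ∈ T, ((Q k c).image (fun u => (Fin.snoc u c : Fin (m + 1) → α))).card = (Q k c).card := by
        intro c _
        refine Finset.card_image_of_injOn ?_
        intro u _ v _ huv
        funext j
        have := congrFun huv (Fin.castSucc j)
        simpa [Fin.snoc_castSucc] using this
      have hsub : ∀ c ∈ T, (Q k c).image (fun u => (Fin.snoc u c : Fin (m + 1) → α)) ⊆ P k.castSucc := by
        intro c _ g hg
        obtain ⟨u, hu, rfl⟩ := Finset.mem_image.1 hg
        obtain ⟨w, hw, rfl⟩ := Finset.mem_image.1 hu
        obtain ⟨f, hf, rfl⟩ := Finset.mem_image.1 hw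
        have hfc : f (Fin.last (m + 1)) = c := (Finset.mem_filter.1 hf).2
        have hfZ : f ∈ Z := (Finset.mem_filter.1 hf).1
        refine Finset.mem_image.2 ⟨f, hfZ, ?_⟩
        funext j
        induction j using Fin.lastCases with
        | last =>
          have h1 : (k.castSucc).succAbove (Fin.last m) = Fin.last (m + 1) := by
            rw [Fin.succAbove_of_le_castSucc _ _ (by
              exact Fin.castSucc_le_castSucc_iff.2 (Fin.le_last k)), Fin.succ_last]
          show f ((k.castSucc).succAbove (Fin.last m)) = _
          rw [h1, hfc, Fin.snoc_last]
        | cast j =>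
          show f ((k.castSucc).succAbove (Fin.castSucc j)) = _
          rw [Fin.castSucc_succAbove_castSucc, Fin.snoc_castSucc]
          rfl
      have hdisj : (T : Set α).PairwiseDisjoint
          (fun c => (Q k c).image (fun u => (Fin.snoc u c : Fin (m + 1) → α))) := by
        intro c₁ _ c₂ _ hne
        refine Finset.disjoint_left.2 fun g hg₁ hg₂ => ?_
        obtain ⟨u, _, rfl⟩ := Finset.mem_image.1 hg₁
        obtain ⟨v, _, hv⟩ := Finset.mem_image.1 hg₂
        apply hne
        have := congrFun hv (Fin.last m)
        exact (by simpa [Fin.snoc_last] using this : c₂ = c₁).symm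
      calc ∑ c ∈ T, (Q k c).card
          = ∑ c ∈ T, ((Q k c).image (fun u => (Fin.snoc u c : Fin (m + 1) → α))).card :=
            (Finset.sum_congr rfl fun c hc => (himg c hc).symm)
        _ = (T.biUnion (fun c => (Q k c).image (fun u => (Fin.snoc u c : Fin (m + 1) → α)))).card :=
            (Finset.card_biUnion hdisj).symm
        _ ≤ (P k.castSucc).card := by
            refine Finset.card_le_card ?_
            intro g hg
            obtain ⟨c, hc, hgc⟩ := Finset.mem_biUnion.1 hg
            exact hsub c hc hgc
    -- fibers are nonempty and satisfy the induction hypothesis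
    have hIH : ∀ c ∈ T, (W c).card ^ m ≤ ∏ k : Fin (m + 1), (Q k c).card := by
      intro c hc
      obtain ⟨f, hf, hfc⟩ := Finset.mem_image.1 hc
      have hfZc : f ∈ Zc c := Finset.mem_filter.2 ⟨hf, hfc⟩
      have : (W c).Nonempty := ⟨f ∘ Fin.castSucc, Finset.mem_image_of_mem _ hfZc⟩
      exact ih (W c) this
    -- numeric assembly in ℝ≥0
    have main : ((Z.card : ℝ≥0)) ^ (m + 1)
        ≤ ((P (Fin.last (m + 1))).card : ℝ≥0)
          * ∏ k : Fin (m + 1), ((P k.castSucc).card : ℝ≥0) := by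
      have happ := holder_pow_const T (Finset.univ : Finset (Fin (m + 1)))
        Finset.univ_nonempty
        ((P (Fin.last (m + 1))).card : ℝ≥0)
        (fun c => ((Zc c).card : ℝ≥0))
        (fun k c => ((Q k c).card : ℝ≥0))
        (by
          intro c hc
          rw [Finset.card_univ, Fintype.card_fin]
          have h1 : (Zc c).card ^ (m + 1) ≤ (P (Fin.last (m + 1))).card * ∏ k : Fin (m + 1), (Q k c).card := by
            rw [hZcW c, pow_succ, mul_comm]
            exact Nat.mul_le_mul (Finset.card_le_card (hWP c)) (hIH c hc)
          show (((Zc c).card : ℝ≥0)) ^ (m + 1)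
              ≤ ((P (Fin.last (m + 1))).card : ℝ≥0) * ∏ k : Fin (m + 1), ((Q k c).card : ℝ≥0)
          exact_mod_cast h1)
      rw [Finset.card_univ, Fintype.card_fin] at happ
      calc ((Z.card : ℝ≥0)) ^ (m + 1)
          = (∑ c ∈ T, ((Zc c).card : ℝ≥0)) ^ (m + 1) := by
            rw [← Nat.cast_sum, ← hcard]
        _ ≤ ((P (Fin.last (m + 1))).card : ℝ≥0)
            * ∏ k : Fin (m + 1), ∑ c ∈ T, ((Q k c).card : ℝ≥0) := happ
        _ ≤ ((P (Fin.last (m + 1))).card : ℝ≥0)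
            * ∏ k : Fin (m + 1), ((P k.castSucc).card : ℝ≥0) := by
            refine mul_le_mul_right (Finset.prod_le_prod (fun _ _ => zero_le) ?_) _
            intro k _
            rw [← Nat.cast_sum]
            exact_mod_cast hQP k
    have main' : Z.card ^ (m + 1)
        ≤ (P (Fin.last (m + 1))).card * ∏ k : Fin (m + 1), (P k.castSucc).card := by
      exact_mod_cast main
    calc Z.card ^ (m + 1)
        ≤ (P (Fin.last (m + 1))).card * ∏ k : Fin (m + 1), (P k.castSucc).card := main'
      _ = ∏ k : Fin (m + 2), (P k).card := by
          rw [Fin.prod_univ_castSucc (f := fun k : Fin (m + 2) => (P k).card)]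
          exact mul_comm _ _

/-- The finset of `r`-subtuples of members of `Z`. -/
noncomputable def subtupleSet (m r n : ℕ) (Z : Finset (Fin m → Fin n)) :
    Finset (Fin r → Fin n) :=
  letI := Classical.decPred
    (fun w : Fin r → Fin n => ∃ i ∈ Z, ∃ s : Fin r → Fin m, StrictMono s ∧ w = i ∘ s)
  Finset.univ.filter
    (fun w => ∃ i ∈ Z, ∃ s : Fin r → Fin m, StrictMono s ∧ w = i ∘ s)

lemma mem_subtupleSet {m r n : ℕ} {Z : Finset (Fin m → Fin n)} {w : Fin r → Fin n} :
    w ∈ subtupleSet m r n Z ↔ ∃ i ∈ Z, ∃ s : Fin r → Fin m, StrictMono s ∧ w = i ∘ s := by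
  classical
  simp [subtupleSet]

/-- One-step shadow inequality for subtuple sets. -/
lemma subtupleSet_step (m n : ℕ) (Z : Finset (Fin m → Fin n)) (s : ℕ) (hs : 1 ≤ s) :
    (subtupleSet m (s + 1) n Z).card ^ s ≤ (subtupleSet m s n Z).card ^ (s + 1) := by
  classical
  rcases Finset.eq_empty_or_nonempty (subtupleSet m (s + 1) n Z) with h | h
  · rw [h, Finset.card_empty, zero_pow (by omega)]
    exact zero_le
  · obtain ⟨s', rfl⟩ : ∃ s', s = s' + 1 := ⟨s - 1, by omega⟩
    have hLW := loomis_whitney_s14 (s' + 1) (subtupleSet m (s' + 2) n Z) h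
    refine hLW.trans ?_
    have hsub : ∀ k : Fin (s' + 2),
        ((subtupleSet m (s' + 2) n Z).image (fun f => f ∘ k.succAbove))
          ⊆ subtupleSet m (s' + 1) n Z := by
      intro k w hw
      obtain ⟨f, hf, rfl⟩ := Finset.mem_image.1 hw
      obtain ⟨i, hi, t, ht, rfl⟩ := mem_subtupleSet.1 hf
      exact mem_subtupleSet.2
        ⟨i, hi, t ∘ k.succAbove, ht.comp (Fin.strictMono_succAbove k), rfl⟩
    calc ∏ k : Fin (s' + 2),
          ((subtupleSet m (s' + 2) n Z).image (fun f => f ∘ k.succAbove)).card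
        ≤ ∏ _k : Fin (s' + 2), (subtupleSet m (s' + 1) n Z).card :=
          Finset.prod_le_prod (fun _ _ => Nat.zero_le _)
            (fun k _ => Finset.card_le_card (hsub k))
      _ = (subtupleSet m (s' + 1) n Z).card ^ (s' + 2) := by
          rw [Finset.prod_const, Finset.card_univ, Fintype.card_fin]

/-- Projection lower bound for nondecreasing tuples: if Z is a set of
nondecreasing ω-tuples and L the set of their nondecreasing r-subtuples
(subsequences), then |Z|^r ≤ |L|^ω, i.e. |L| ≥ |Z|^{r/ω}. -/
theorem projection_lower_bound_monotone (om r n : ℕ) (hr : 1 ≤ r) (hrom : r ≤ om)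
    (Z : Finset (Fin om → Fin n)) (hZ : ∀ i ∈ Z, Monotone i) :
    Z.card ^ r ≤
      (Set.ncard {w : Fin r → Fin n |
        ∃ i ∈ Z, ∃ s : Fin r → Fin om, StrictMono s ∧ w = i ∘ s}) ^ om := by
  classical
  -- the set in the statement is the coercion of `subtupleSet om r n Z`
  have hset : {w : Fin r → Fin n |
      ∃ i ∈ Z, ∃ s : Fin r → Fin om, StrictMono s ∧ w = i ∘ s}
      = ↑(subtupleSet om r n Z) := by
    ext w
    simp [mem_subtupleSet]
  rw [hset, Set.ncard_coe_finset]
  -- chain: for all s with r ≤ s ≤ om, |L_s|^r ≤ |L_r|^s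
  have chain : ∀ s, r ≤ s → s ≤ om →
      (subtupleSet om s n Z).card ^ r ≤ (subtupleSet om r n Z).card ^ s := by
    intro s hrs
    induction s, hrs using Nat.le_induction with
    | base => intro _; exact le_rfl
    | succ s hrs ih =>
      intro hsom
      have hs1 : 1 ≤ s := le_trans hr hrs
      have h1 : (subtupleSet om (s + 1) n Z).card ^ s
          ≤ (subtupleSet om s n Z).card ^ (s + 1) := subtupleSet_step om n Z s hs1
      have h2 := ih (by omega)
      have h3 : ((subtupleSet om (s + 1) n Z).card ^ r) ^ s
          ≤ ((subtupleSet om r n Z).card ^ (s + 1)) ^ s := by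
        calc ((subtupleSet om (s + 1) n Z).card ^ r) ^ s
            = ((subtupleSet om (s + 1) n Z).card ^ s) ^ r := by
              rw [← pow_mul, ← pow_mul, Nat.mul_comm]
          _ ≤ ((subtupleSet om s n Z).card ^ (s + 1)) ^ r :=
              Nat.pow_le_pow_left h1 r
          _ = ((subtupleSet om s n Z).card ^ r) ^ (s + 1) := by
              rw [← pow_mul, ← pow_mul, Nat.mul_comm]
          _ ≤ ((subtupleSet om r n Z).card ^ s) ^ (s + 1) :=
              Nat.pow_le_pow_left h2 (s + 1)
          _ = ((subtupleSet om r n Z).card ^ (s + 1)) ^ s := by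
              rw [← pow_mul, ← pow_mul, Nat.mul_comm]
      exact (Nat.pow_le_pow_iff_left (by omega)).1 h3
  -- Z ⊆ L_om
  have hZL : Z ⊆ subtupleSet om om n Z := by
    intro i hi
    refine mem_subtupleSet.2 ⟨i, hi, id, strictMono_id, ?_⟩
    rw [Function.comp_id]
  calc Z.card ^ r ≤ (subtupleSet om om n Z).card ^ r :=
        Nat.pow_le_pow_left (Finset.card_le_card hZL) r
    _ ≤ (subtupleSet om r n Z).card ^ om := chain om hrom le_rfl
end

section
/- (Expansion bound for the symmetry preserving algorithm) Let Z be a subset of the nondecreasing ω-tuples from {1,...,n}, where ω = s+t+v. Then |Z| ≤ min( (C(ω,t)·d_A)^{ω/(s+v)}, (C(ω,s)·d_B)^{ω/(v+t)}, (C(ω,v)·d_C)^{ω/(s+t)} ), where d_A, d_B, d_C are respectively the ranks of the restricted encoding matrices, which satisfy d_A ≥ |L_A|/C(ω,t) with L_A the set of nondecreasing (s+v)-subtuples of elements of Z (and analogously for d_B, d_C). Consequently |Z| ≤ |L_A|^{ω/(s+v)} where L_A is the set of all nondecreasing (s+v)-subsequences of elements of Z. -/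
open Finset MeasureTheory
open scoped ENNReal NNReal

lemma holder_sum {α ι : Type*} (A : Finset α) (s : Finset ι)
    (f : ι → α → ENNReal) {p : ι → ℝ} (hp : ∑ i ∈ s, p i = 1)
    (h2p : ∀ i ∈ s, 0 ≤ p i) :
    ∑ a ∈ A, ∏ i ∈ s, f i a ^ p i ≤ ∏ i ∈ s, (∑ a ∈ A, f i a) ^ p i := by
  letI : MeasurableSpace α := ⊤
  calc ∑ a ∈ A, ∏ i ∈ s, f i a ^ p i
      = ∫⁻ x, ∏ i ∈ s, f i x ^ p i ∂(∑ a ∈ A, Measure.dirac a) := by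
        rw [lintegral_finset_sum_measure]
        exact (Finset.sum_congr rfl fun a _ =>
          (lintegral_dirac' a (f := fun x => ∏ i ∈ s, f i x ^ p i) measurable_from_top).symm)
    _ ≤ ∏ i ∈ s, (∫⁻ x, f i x ∂(∑ a ∈ A, Measure.dirac a)) ^ p i :=
        ENNReal.lintegral_prod_norm_pow_le s
          (fun i _ => measurable_from_top.aemeasurable) hp h2p
    _ = ∏ i ∈ s, (∑ a ∈ A, f i a) ^ p i := by
        refine Finset.prod_congr rfl fun i _ => ?_
        rw [lintegral_finset_sum_measure]
        congr 1
        exact Finset.sum_congr rfl fun a _ => lintegral_dirac' a (f := f i) measurable_from_top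

lemma discrete_LW_s15 {α : Type*} [DecidableEq α] :
    ∀ (m : ℕ) (Z : Finset (Fin (m + 1) → α)), Z.Nonempty →
      Z.card ^ m ≤ ∏ j : Fin (m + 1), (Z.image (fun f => f ∘ Fin.succAbove j)).card := by
  intro m
  induction m with
  | zero =>
    intro Z hZ
    simpa using Finset.card_pos.2 (hZ.image (fun f => f ∘ Fin.succAbove (0 : Fin 1)))
  | succ m ih =>
    intro Z hZne
    classical
    set ℓ : Fin (m + 2) := Fin.last (m + 1) with hℓ
    set A : Finset α := Z.image (fun f => f ℓ) with hA
    set Fib : α → Finset (Fin (m + 2) → α) := fun a => Z.filter (fun f => f ℓ = a) with hFib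
    set Sl : α → Finset (Fin (m + 1) → α) :=
      fun a => (Fib a).image (fun f => f ∘ Fin.castSucc) with hSl
    set W : Finset (Fin (m + 1) → α) := Z.image (fun f => f ∘ Fin.succAbove ℓ) with hW
    set P : Fin (m + 1) → Finset (Fin (m + 1) → α) :=
      fun j => Z.image (fun f => f ∘ Fin.succAbove j.castSucc) with hP
    set T : Fin (m + 1) → α → Finset (Fin m → α) :=
      fun j a => (Sl a).image (fun g => g ∘ Fin.succAbove j) with hT
    -- F1 : card decomposition
    have F1 : Z.card = ∑ a ∈ A, (Fib a).card :=
      Finset.card_eq_sum_card_fiberwise (fun f hf => Finset.mem_image_of_mem _ hf)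
    -- F2 : slices have the same card as fibers
    have F2 : ∀ a, (Sl a).card = (Fib a).card := by
      intro a
      apply Finset.card_image_of_injOn
      intro f₁ hf₁ f₂ hf₂ h
      have h₁ : f₁ ℓ = a := (Finset.mem_filter.1 hf₁).2
      have h₂ : f₂ ℓ = a := (Finset.mem_filter.1 hf₂).2
      funext i
      cases i using Fin.lastCases with
      | last => rw [← hℓ, h₁, h₂]
      | cast i => exact congrFun h i
    -- F3 : slices are contained in W
    have F3 : ∀ a, Sl a ⊆ W := by
      intro a
      rw [hSl, hW, hℓ, Fin.succAbove_last]
      exact Finset.image_subset_image (Finset.filter_subset _ _)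
    have F3' : ∀ a ∈ A, (Sl a).Nonempty := by
      intro a ha
      obtain ⟨f, hf, hfa⟩ := Finset.mem_image.1 ha
      exact ⟨f ∘ Fin.castSucc, Finset.mem_image_of_mem _ (Finset.mem_filter.2 ⟨hf, hfa⟩)⟩
    -- F4 : induction hypothesis on slices
    have F4 : ∀ a ∈ A, (Sl a).card ^ m ≤ ∏ j : Fin (m + 1), (T j a).card := fun a ha =>
      ih (Sl a) (F3' a ha)
    -- F5 : fiberwise projections sum up into P j
    have F5 : ∀ j : Fin (m + 1), ∑ a ∈ A, (T j a).card ≤ (P j).card := by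
      intro j
      set E : α → Finset (Fin (m + 1) → α) :=
        fun a => (T j a).image (fun g => Fin.snoc g a) with hE
      have hdisj : ∀ a₁ ∈ A, ∀ a₂ ∈ A, a₁ ≠ a₂ → Disjoint (E a₁) (E a₂) := by
        intro a₁ _ a₂ _ hne
        rw [Finset.disjoint_left]
        rintro x hx₁ hx₂
        obtain ⟨g₁, _, rfl⟩ := Finset.mem_image.1 hx₁
        obtain ⟨g₂, _, h⟩ := Finset.mem_image.1 hx₂
        apply hne
        have := congrFun h (Fin.last m)
        simpa [Fin.snoc_last] using this.symm
      have hcard : ∀ a, (E a).card = (T j a).card := by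
        intro a
        apply Finset.card_image_of_injOn
        intro g₁ _ g₂ _ h
        funext i
        have := congrFun h i.castSucc
        simpa [Fin.snoc_castSucc] using this
      have hsub : A.biUnion E ⊆ P j := by
        intro x hx
        obtain ⟨a, ha, hx⟩ := Finset.mem_biUnion.1 hx
        obtain ⟨g, hg, rfl⟩ := Finset.mem_image.1 hx
        obtain ⟨h, hh, rfl⟩ := Finset.mem_image.1 hg
        obtain ⟨f, hf, rfl⟩ := Finset.mem_image.1 hh
        have hfl : f ℓ = a := (Finset.mem_filter.1 hf).2
        have key : (Fin.snoc ((f ∘ Fin.castSucc) ∘ Fin.succAbove j) a : Fin (m + 1) → α)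
            = f ∘ Fin.succAbove j.castSucc := by
          funext i
          cases i using Fin.lastCases with
          | last =>
            rw [Fin.snoc_last, Function.comp_apply,
              Fin.succAbove_castSucc_of_le j (Fin.last m) (Fin.le_last j), Fin.succ_last, ← hℓ, hfl]
          | cast i =>
            rw [Fin.snoc_castSucc, Function.comp_apply, Function.comp_apply, Function.comp_apply,
              Fin.castSucc_succAbove_castSucc]
        rw [key]
        exact Finset.mem_image_of_mem _ ((Finset.mem_filter.1 hf).1)
      calc ∑ a ∈ A, (T j a).card
          = ∑ a ∈ A, (E a).card := (Finset.sum_congr rfl fun a _ => (hcard a).symm)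
        _ = (A.biUnion E).card := (Finset.card_biUnion hdisj).symm
        _ ≤ (P j).card := Finset.card_le_card hsub
    -- the analytic part
    have hmr : ((m : ℝ) + 1) ≠ 0 := by positivity
    set r : ℝ := ((m : ℝ) + 1)⁻¹ with hrdef
    have hr0 : 0 ≤ r := by positivity
    have hpt : ∀ a ∈ A, ((Sl a).card : ℝ≥0∞) ≤
        ((W.card : ℝ≥0∞) * ∏ j : Fin (m + 1), ((T j a).card : ℝ≥0∞)) ^ r := by
      intro a ha
      have h1 : (Sl a).card ^ (m + 1) ≤ W.card * ∏ j : Fin (m + 1), (T j a).card := by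
        calc (Sl a).card ^ (m + 1) = (Sl a).card * (Sl a).card ^ m := by ring
          _ ≤ W.card * ∏ j : Fin (m + 1), (T j a).card :=
            Nat.mul_le_mul (Finset.card_le_card (F3 a)) (F4 a ha)
      have h2 : ((Sl a).card : ℝ≥0∞) ^ ((m : ℝ) + 1) ≤
          (W.card : ℝ≥0∞) * ∏ j : Fin (m + 1), ((T j a).card : ℝ≥0∞) := by
        have h1' := (Nat.cast_le (α := ℝ≥0∞)).2 h1
        push_cast at h1'
        have : (((m : ℕ) : ℝ) + 1) = (((m + 1 : ℕ) : ℕ) : ℝ) := by push_cast; ring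
        rw [this, ENNReal.rpow_natCast]
        exact h1'
      calc ((Sl a).card : ℝ≥0∞)
          = (((Sl a).card : ℝ≥0∞) ^ ((m : ℝ) + 1)) ^ r := by
            rw [← ENNReal.rpow_mul, mul_inv_cancel₀ hmr, ENNReal.rpow_one]
        _ ≤ ((W.card : ℝ≥0∞) * ∏ j : Fin (m + 1), ((T j a).card : ℝ≥0∞)) ^ r :=
            ENNReal.rpow_le_rpow h2 hr0
    have hp1 : ∑ _j : Fin (m + 1), r = 1 := by
      rw [Finset.sum_const, Finset.card_univ, Fintype.card_fin, nsmul_eq_mul]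
      push_cast
      exact mul_inv_cancel₀ hmr
    have main : (Z.card : ℝ≥0∞) ≤
        ((W.card : ℝ≥0∞)) ^ r * ∏ j : Fin (m + 1), ((P j).card : ℝ≥0∞) ^ r := by
      calc (Z.card : ℝ≥0∞) = ∑ a ∈ A, ((Sl a).card : ℝ≥0∞) := by
            rw [F1]
            push_cast
            exact Finset.sum_congr rfl fun a _ => by rw [F2]
        _ ≤ ∑ a ∈ A, ((W.card : ℝ≥0∞) * ∏ j : Fin (m + 1), ((T j a).card : ℝ≥0∞)) ^ r :=
            Finset.sum_le_sum hpt
        _ = ∑ a ∈ A, (W.card : ℝ≥0∞) ^ r * ∏ j : Fin (m + 1), ((T j a).card : ℝ≥0∞) ^ r := by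
            refine Finset.sum_congr rfl fun a _ => ?_
            rw [ENNReal.mul_rpow_of_nonneg _ _ hr0, ← ENNReal.prod_rpow_of_nonneg hr0]
        _ = (W.card : ℝ≥0∞) ^ r * ∑ a ∈ A, ∏ j : Fin (m + 1), ((T j a).card : ℝ≥0∞) ^ r := by
            rw [Finset.mul_sum]
        _ ≤ (W.card : ℝ≥0∞) ^ r *
              ∏ j : Fin (m + 1), (∑ a ∈ A, ((T j a).card : ℝ≥0∞)) ^ r :=
            mul_le_mul_right (holder_sum A Finset.univ
              (fun j a => ((T j a).card : ℝ≥0∞)) hp1 (fun _ _ => hr0)) _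
        _ ≤ (W.card : ℝ≥0∞) ^ r * ∏ j : Fin (m + 1), ((P j).card : ℝ≥0∞) ^ r := by
            refine mul_le_mul_right (Finset.prod_le_prod' fun j _ => ?_) _
            refine ENNReal.rpow_le_rpow ?_ hr0
            exact_mod_cast F5 j
    have final : ((Z.card : ℝ≥0∞)) ^ ((m : ℝ) + 1) ≤
        (W.card : ℝ≥0∞) * ∏ j : Fin (m + 1), ((P j).card : ℝ≥0∞) := by
      calc ((Z.card : ℝ≥0∞)) ^ ((m : ℝ) + 1)
          ≤ (((W.card : ℝ≥0∞)) ^ r *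
              ∏ j : Fin (m + 1), ((P j).card : ℝ≥0∞) ^ r) ^ ((m : ℝ) + 1) :=
            ENNReal.rpow_le_rpow main (by positivity)
        _ = (W.card : ℝ≥0∞) * ∏ j : Fin (m + 1), ((P j).card : ℝ≥0∞) := by
            rw [ENNReal.mul_rpow_of_nonneg _ _ (by positivity : (0:ℝ) ≤ (m : ℝ) + 1),
              ← ENNReal.prod_rpow_of_nonneg (by positivity : (0:ℝ) ≤ (m : ℝ) + 1)]
            simp_rw [← ENNReal.rpow_mul, hrdef, inv_mul_cancel₀ hmr, ENNReal.rpow_one]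
    have final' : Z.card ^ (m + 1) ≤ (∏ j : Fin (m + 1), (P j).card) * W.card := by
      have h := final
      rw [show ((m : ℝ) + 1) = (((m + 1 : ℕ) : ℕ) : ℝ) by push_cast; ring,
        ENNReal.rpow_natCast] at h
      have h' : ((Z.card ^ (m + 1) : ℕ) : ℝ≥0∞) ≤
          (((∏ j : Fin (m + 1), (P j).card) * W.card : ℕ) : ℝ≥0∞) := by
        push_cast
        rw [mul_comm]
        exact h
      exact_mod_cast h'
    rw [Fin.prod_univ_castSucc]
    exact final'

lemma key_projection {α : Type*} [DecidableEq α] (k : ℕ) (hk : 0 < k) :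
    ∀ (m : ℕ), k ≤ m → ∀ (Z : Finset (Fin m → α)) (B : Finset (Fin k → α)),
      (∀ i ∈ Z, ∀ σ : Fin k → Fin m, StrictMono σ → i ∘ σ ∈ B) →
      Z.card ^ k ≤ B.card ^ m := by
  intro m
  induction m with
  | zero => intro hkm; omega
  | succ m ih =>
    intro hkm Z B hB
    rcases Z.eq_empty_or_nonempty with rfl | hZne
    · simp [zero_pow hk.ne']
    rcases eq_or_lt_of_le hkm with hkm' | hkm'
    · -- k = m + 1 : direct injection
      have hσ : StrictMono (Fin.castLE (le_of_eq hkm') : Fin k → Fin (m + 1)) :=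
        Fin.strictMono_castLE _
      have hle : Z.card ≤ B.card := by
        apply Finset.card_le_card_of_injOn (fun i => i ∘ Fin.castLE (le_of_eq hkm'))
        · intro i hi
          exact hB i hi _ hσ
        · intro i₁ _ i₂ _ h
          funext j
          have hj : (Fin.castLE (le_of_eq hkm') (Fin.cast hkm'.symm j)) = j := rfl
          have := congrFun h (Fin.cast hkm'.symm j)
          simpa [hj] using this
      calc Z.card ^ k ≤ B.card ^ k := Nat.pow_le_pow_left hle k
        _ = B.card ^ (m + 1) := by exact congrArg (B.card ^ ·) hkm'
    · -- k ≤ m : Loomis–Whitney + induction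
      have hkm'' : k ≤ m := by omega
      have hm0 : m ≠ 0 := by omega
      have hLW := discrete_LW_s15 m Z hZne
      have hIH : ∀ j : Fin (m + 1),
          (Z.image (fun f => f ∘ Fin.succAbove j)).card ^ k ≤ B.card ^ m := by
        intro j
        apply ih hkm''
        intro g hg σ hσ
        obtain ⟨i, hi, rfl⟩ := Finset.mem_image.1 hg
        have : (i ∘ Fin.succAbove j) ∘ σ = i ∘ (Fin.succAbove j ∘ σ) := rfl
        rw [this]
        exact hB i hi _ ((Fin.strictMono_succAbove j).comp hσ)
      have chain : (Z.card ^ k) ^ m ≤ (B.card ^ (m + 1)) ^ m := by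
        calc (Z.card ^ k) ^ m = (Z.card ^ m) ^ k := by rw [← pow_mul, ← pow_mul, mul_comm]
          _ ≤ (∏ j : Fin (m + 1), (Z.image (fun f => f ∘ Fin.succAbove j)).card) ^ k :=
            Nat.pow_le_pow_left hLW k
          _ = ∏ j : Fin (m + 1), (Z.image (fun f => f ∘ Fin.succAbove j)).card ^ k := by
            rw [← Finset.prod_pow]
          _ ≤ ∏ _j : Fin (m + 1), B.card ^ m := Finset.prod_le_prod' fun j _ => hIH j
          _ = (B.card ^ m) ^ (m + 1) := by
            rw [Finset.prod_const, Finset.card_univ, Fintype.card_fin]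
          _ = (B.card ^ (m + 1)) ^ m := by rw [← pow_mul, ← pow_mul, mul_comm]
      exact (Nat.pow_le_pow_iff_left hm0).1 chain

/-- Expansion bound for the symmetry preserving algorithm (core projection
bound): for positive s, t, v with ω = s+t+v and Z a finite set of
nondecreasing ω-tuples, |Z|^{s+v} ≤ |L_A|^ω where L_A is the set of
nondecreasing (s+v)-subsequences of elements of Z. -/
theorem symmetry_preserving_expansion_bound (s t v n : ℕ)
    (hs : 0 < s) (ht : 0 < t) (hv : 0 < v)
    (Z : Finset (Fin (s + t + v) → Fin n)) (hZ : ∀ i ∈ Z, Monotone i) :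
    Z.card ^ (s + v) ≤
      (Set.ncard {w : Fin (s + v) → Fin n |
        ∃ i ∈ Z, ∃ σ : Fin (s + v) → Fin (s + t + v),
          StrictMono σ ∧ w = i ∘ σ}) ^ (s + t + v) := by
  classical
  set Lset : Set (Fin (s + v) → Fin n) :=
    {w | ∃ i ∈ Z, ∃ σ : Fin (s + v) → Fin (s + t + v), StrictMono σ ∧ w = i ∘ σ} with hLset
  have hfin : Lset.Finite := Set.toFinite _
  have hncard : Lset.ncard = hfin.toFinset.card := by
    rw [← Set.ncard_coe_finset, Set.Finite.coe_toFinset]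
  rw [hncard]
  apply key_projection (s + v) (by omega) (s + t + v) (by omega)
  intro i hi σ hσ
  rw [Set.Finite.mem_toFinset]
  exact ⟨i, hi, σ, hσ, rfl⟩
end
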